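/- Let c(n) denote the n-th Fourier coefficient of the modular j-function, and suppose c(n) ~ e^{4π√n}/(√2 n^{3/4}) as n → ∞ with all c(n) positive integers. Then for n, k → ∞ with n/k → ∞, the n-th Fourier coefficient of j^k, which equals the sum over all compositions a₁ + ⋯ + a_k = n of positive integers of the product c(a₁)⋯c(a_k), is bounded below by e^{Ω(√(nk))}. -/

import Mathlib

open Real Filter Finset

/-- The `n`-th Fourier coefficient of `j^k`: the sum, over all compositions
`a₁ + ⋯ + a_k = n` into positive integers, of `c(a₁)⋯c(a_k)`. -/
noncomputable def powerCoeff (c : ℕ → ℕ) (k n : ℕ) : ℕ :=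
  ∑ a ∈ (Finset.Nat.antidiagonalTuple k n).filter fun a => ∀ i, 1 ≤ a i, ∏ i, c (a i)

/-- Eventually `exp √m ≤ c m`, given the Petersson asymptotic. -/
lemma eventually_exp_sqrt_le (c : ℕ → ℕ)
    (hasymp : Asymptotics.IsEquivalent atTop (fun n : ℕ => (c n : ℝ))
      (fun n : ℕ => Real.exp (4 * π * Real.sqrt n) / (Real.sqrt 2 * (n : ℝ) ^ ((3 : ℝ) / 4)))) :
    ∀ᶠ m : ℕ in atTop, Real.exp (Real.sqrt m) ≤ (c m : ℝ) := by
  set g : ℕ → ℝ := fun m => Real.exp (4 * π * Real.sqrt m) / (Real.sqrt 2 * (m : ℝ) ^ ((3 : ℝ) / 4))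
    with hg
  have hgpos : ∀ m : ℕ, 1 ≤ m → 0 < g m := by
    intro m hm
    apply div_pos (Real.exp_pos _)
    apply mul_pos (Real.sqrt_pos.mpr (by norm_num))
    apply Real.rpow_pos_of_pos
    exact_mod_cast Nat.lt_of_lt_of_le Nat.zero_lt_one hm
  have hgne : ∀ᶠ m : ℕ in atTop, g m ≠ 0 := by
    filter_upwards [eventually_ge_atTop 1] with m hm
    exact (hgpos m hm).ne'
  have h1 : Tendsto (fun m : ℕ => (c m : ℝ) / g m) atTop (nhds 1) :=
    (Asymptotics.isEquivalent_iff_tendsto_one hgne).mp hasymp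
  -- lower bound for g m / exp √m
  have hsqrt : Tendsto (fun m : ℕ => Real.sqrt m) atTop atTop := by
    have h0 : Tendsto (fun m : ℕ => ((m : ℝ)) ^ ((1 : ℝ) / 2)) atTop atTop :=
      (tendsto_rpow_atTop (by norm_num)).comp tendsto_natCast_atTop_atTop
    exact h0.congr fun m => (Real.sqrt_eq_rpow _).symm
  have h2' : Tendsto (fun m : ℕ => (1 / Real.sqrt 2) * (Real.exp (Real.sqrt m) / (Real.sqrt m) ^ 3))
      atTop atTop := by
    apply Tendsto.const_mul_atTop (by positivity)
    exact (tendsto_exp_div_pow_atTop 3).comp hsqrt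
  have h2 : Tendsto (fun m : ℕ => g m / Real.exp (Real.sqrt m)) atTop atTop := by
    apply tendsto_atTop_mono' _ _ h2'
    filter_upwards [eventually_ge_atTop 1] with m hm
    have hm1 : (1 : ℝ) ≤ m := by exact_mod_cast hm
    have hs1 : (1 : ℝ) ≤ Real.sqrt m := by
      rw [show (1:ℝ) = Real.sqrt 1 by simp]
      exact Real.sqrt_le_sqrt hm1
    have hs0 : (0 : ℝ) < Real.sqrt m := lt_of_lt_of_le one_pos hs1
    -- m ^ (3/4) ≤ (√m)^3
    have hpow : (m : ℝ) ^ ((3 : ℝ) / 4) ≤ (Real.sqrt m) ^ 3 := by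
      have h34 : (m : ℝ) ^ ((3 : ℝ) / 4) ≤ (m : ℝ) ^ ((3 : ℝ) / 2) :=
        Real.rpow_le_rpow_of_exponent_le hm1 (by norm_num)
      have : (Real.sqrt m) ^ 3 = (m : ℝ) ^ ((3 : ℝ) / 2) := by
        rw [Real.sqrt_eq_rpow, ← Real.rpow_natCast ((m:ℝ) ^ ((1:ℝ)/2)) 3,
          ← Real.rpow_mul (by positivity)]
        norm_num
      rw [this]; exact h34
    -- exp (2 √m) ≤ exp ((4π - 1) √m)
    have hexp : Real.exp (2 * Real.sqrt m) ≤ Real.exp ((4 * π - 1) * Real.sqrt m) := by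
      apply Real.exp_le_exp.mpr
      apply mul_le_mul_of_nonneg_right _ hs0.le
      nlinarith [Real.pi_gt_three]
    have hgdiv : g m / Real.exp (Real.sqrt m)
        = Real.exp ((4 * π - 1) * Real.sqrt m) / (Real.sqrt 2 * (m : ℝ) ^ ((3 : ℝ) / 4)) := by
      rw [hg]
      rw [div_div, mul_comm (Real.sqrt 2 * (m:ℝ) ^ ((3:ℝ)/4)) (Real.exp (Real.sqrt m)),
        ← div_div, ← Real.exp_sub]
      ring_nf
    rw [hgdiv]
    calc 1 / Real.sqrt 2 * (Real.exp (Real.sqrt m) / Real.sqrt m ^ 3)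
        = Real.exp (Real.sqrt m) / (Real.sqrt 2 * Real.sqrt m ^ 3) := by
          field_simp
      _ ≤ Real.exp (2 * Real.sqrt m) / (Real.sqrt 2 * Real.sqrt m ^ 3) := by
          apply div_le_div_of_nonneg_right ?_ (by positivity)
          apply Real.exp_le_exp.mpr; nlinarith
      _ ≤ Real.exp ((4 * π - 1) * Real.sqrt m) / (Real.sqrt 2 * Real.sqrt m ^ 3) :=
          div_le_div_of_nonneg_right hexp (by positivity)
      _ ≤ Real.exp ((4 * π - 1) * Real.sqrt m) / (Real.sqrt 2 * (m : ℝ) ^ ((3 : ℝ) / 4)) := by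
          apply div_le_div_of_nonneg_left (Real.exp_pos _).le (by positivity)
          exact mul_le_mul_of_nonneg_left hpow (Real.sqrt_nonneg 2)
  have h3 : Tendsto (fun m : ℕ => (c m : ℝ) / Real.exp (Real.sqrt m)) atTop atTop := by
    have := h1.pos_mul_atTop one_pos h2
    apply this.congr'
    filter_upwards [eventually_ge_atTop 1] with m hm
    rw [div_mul_div_comm, mul_comm (g m), mul_div_mul_right _ _ (hgpos m hm).ne']
  filter_upwards [h3.eventually_ge_atTop 1] with m hm
  have := (one_le_div (Real.exp_pos _)).mp hm
  linarith
set_option maxHeartbeats 800000 in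
/-- If `c(n)` are positive integers with `c(n) ~ e^{4π√n}/(√2 n^{3/4})` (the Fourier
coefficients of the modular `j`-function), then as `n, k → ∞` with `n/k → ∞`, the `n`-th
Fourier coefficient of `j^k`, i.e. the sum over all compositions `a₁ + ⋯ + a_k = n` of
`c(a₁)⋯c(a_k)`, is bounded below by `e^{Ω(√(nk))}`. -/
theorem powerCoeff_lower_bound (c : ℕ → ℕ) (hpos : ∀ n, 1 ≤ n → 0 < c n)
    (hasymp : Asymptotics.IsEquivalent atTop (fun n : ℕ => (c n : ℝ))
      (fun n : ℕ => Real.exp (4 * π * Real.sqrt n) / (Real.sqrt 2 * (n : ℝ) ^ ((3 : ℝ) / 4))))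
    (n k : ℕ → ℕ) (hk : Tendsto k atTop atTop)
    (hnk : Tendsto (fun i => (n i : ℝ) / (k i : ℝ)) atTop atTop) :
    ∃ δ : ℝ, 0 < δ ∧ ∀ᶠ i in atTop,
      Real.exp (δ * Real.sqrt ((n i : ℝ) * (k i : ℝ))) ≤ (powerCoeff c (k i) (n i) : ℝ) := by
  obtain ⟨N, hN⟩ := (eventually_atTop).mp (eventually_exp_sqrt_le c hasymp)
  refine ⟨1/2, by norm_num, ?_⟩
  filter_upwards [hk.eventually_ge_atTop 1,
    hnk.eventually_ge_atTop (max (N + 2 : ℕ) 2 : ℕ)] with i hk1 hni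
  set K := k i with hK
  set M := n i with hM
  have hK0 : (0 : ℝ) < K := by exact_mod_cast hk1
  -- the quotient and remainder
  set q := M / K with hq
  set r := M % K with hr
  have hrK : r < K := Nat.mod_lt _ hk1
  have hMeq : K * q + r = M := Nat.div_add_mod M K
  -- q is large
  have hnM : ((max (N + 2) 2 : ℕ) : ℝ) ≤ (M : ℝ) / (K : ℝ) := hni
  have hMge : (max (N + 2) 2) * K ≤ M := by
    have : ((max (N + 2) 2 : ℕ) : ℝ) * (K : ℝ) ≤ M := by
      rw [← le_div_iff₀ hK0]; exact hnM
    exact_mod_cast this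
  have hqge : max (N + 2) 2 ≤ q := Nat.le_div_iff_mul_le hk1 |>.mpr hMge
  have hqN : N ≤ q := le_trans (le_trans (Nat.le_add_right N 2) (le_max_left _ _)) hqge
  have hq2 : 2 ≤ q := le_trans (le_max_right _ _) hqge
  -- the composition
  set a : Fin K → ℕ := fun j => q + if (j : ℕ) < r then 1 else 0 with ha
  have hsum : ∑ j, a j = M := by
    rw [ha, Fin.sum_univ_eq_sum_range (fun j => q + if j < r then 1 else 0) K]
    rw [Finset.sum_add_distrib, Finset.sum_const, Finset.card_range, smul_eq_mul]
    have hfilt : (Finset.range K).filter (fun j => j < r) = Finset.range r := by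
      ext x; simp only [Finset.mem_filter, Finset.mem_range]; omega
    have hsumite : ∑ j ∈ Finset.range K, (if j < r then 1 else 0) = r := by
      rw [← Finset.sum_filter, hfilt, Finset.sum_const, Finset.card_range, smul_eq_mul, mul_one]
    omega
  have hmem : a ∈ (Finset.Nat.antidiagonalTuple K M).filter fun a => ∀ i, 1 ≤ a i := by
    rw [Finset.mem_filter]
    refine ⟨Finset.Nat.mem_antidiagonalTuple.mpr hsum, fun j => ?_⟩
    have : 1 ≤ q := le_trans (by norm_num) hq2
    simp only [ha]; omega
  -- the single-term lower bound
  have hsingle : (∏ j, c (a j)) ≤ powerCoeff c K M := by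
    unfold powerCoeff
    exact Finset.single_le_sum (f := fun a : Fin K → ℕ => ∏ j, c (a j))
      (fun _ _ => Nat.zero_le _) hmem
  -- bound each factor
  have hfac : ∀ j : Fin K, Real.exp (Real.sqrt (a j)) ≤ (c (a j) : ℝ) := by
    intro j
    apply hN
    simp only [ha]
    omega
  have hprod : Real.exp (∑ j, Real.sqrt (a j)) ≤ ((∏ j, c (a j) : ℕ) : ℝ) := by
    rw [Real.exp_sum, Nat.cast_prod]
    exact Finset.prod_le_prod (fun _ _ => (Real.exp_pos _).le) (fun j _ => hfac j)
  -- sum of square roots lower bound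
  have hsumsqrt : (K : ℝ) * Real.sqrt q ≤ ∑ j, Real.sqrt (a j) := by
    have : ∀ j : Fin K, Real.sqrt q ≤ Real.sqrt (a j) := by
      intro j
      apply Real.sqrt_le_sqrt
      have : q ≤ a j := by simp only [ha]; omega
      exact_mod_cast this
    calc (K : ℝ) * Real.sqrt q = ∑ _j : Fin K, Real.sqrt q := by
          rw [Finset.sum_const, Finset.card_univ, Fintype.card_fin]; ring
      _ ≤ ∑ j, Real.sqrt (a j) := Finset.sum_le_sum (fun j _ => this j)
  -- (1/2) √(MK) ≤ K √q
  have hqreal : (M : ℝ) / (2 * K) ≤ (q : ℝ) := by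
    have h1 : (M : ℝ) < K * (q + 1) := by
      have : M < K * (q + 1) := by
        rw [Nat.mul_succ]; omega
      exact_mod_cast this
    have h2 : (2 : ℝ) ≤ (M : ℝ) / K := le_trans (by exact_mod_cast le_max_right (N+2) 2) hnM
    rw [div_le_iff₀ (by positivity)]
    nlinarith [(le_div_iff₀ hK0).mp h2]
  have hmain : (1/2 : ℝ) * Real.sqrt ((M : ℝ) * K) ≤ (K : ℝ) * Real.sqrt q := by
    have hsq : (1/4 : ℝ) * ((M : ℝ) * K) ≤ (K : ℝ)^2 * q := by
      have : (K:ℝ)^2 * ((M:ℝ)/(2*K)) ≤ (K:ℝ)^2 * q :=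
        mul_le_mul_of_nonneg_left hqreal (by positivity)
      have heq : (K:ℝ)^2 * ((M:ℝ)/(2*K)) = (K:ℝ) * M / 2 := by
        field_simp
      nlinarith [(Nat.cast_nonneg M : (0:ℝ) ≤ M), (Nat.cast_nonneg K : (0:ℝ) ≤ K)]
    calc (1/2 : ℝ) * Real.sqrt ((M : ℝ) * K)
        = Real.sqrt ((1/4 : ℝ) * ((M : ℝ) * K)) := by
          rw [show (1/4 : ℝ) * ((M : ℝ) * K) = (1/2)^2 * ((M : ℝ) * K) by norm_num,
            Real.sqrt_mul (by positivity : (0:ℝ) ≤ ((1:ℝ)/2)^2),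
            Real.sqrt_sq (by norm_num : (0:ℝ) ≤ (1:ℝ)/2)]
      _ ≤ Real.sqrt ((K : ℝ)^2 * q) := Real.sqrt_le_sqrt hsq
      _ = (K : ℝ) * Real.sqrt q := by
          rw [Real.sqrt_mul (sq_nonneg _), Real.sqrt_sq hK0.le]
  -- finish
  calc Real.exp (1/2 * Real.sqrt ((M : ℝ) * K))
      ≤ Real.exp ((K : ℝ) * Real.sqrt q) := Real.exp_le_exp.mpr hmain
    _ ≤ Real.exp (∑ j, Real.sqrt (a j)) := Real.exp_le_exp.mpr hsumsqrt
    _ ≤ ((∏ j, c (a j) : ℕ) : ℝ) := hprod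
    _ ≤ (powerCoeff c K M : ℝ) := by exact_mod_cast hsingle
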